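/- Let p be a prime, d a positive integer, and α = (α_1, ..., α_r) a partition of d in which every part has the form p^k - 1 for some k ≥ 1. Then the rational number p · τ_{d-1} / ∏_{i=1}^r (α_i + 1)! is an integer not divisible by p. -/

import Mathlib

/-- The `n`-th Todd number `τ_n = ∏_{p prime} p^{⌊n/(p-1)⌋}`. -/
def toddNumber (n : ℕ) : ℕ :=
  ∏ p ∈ (Finset.range (n + 2)).filter Nat.Prime, p ^ (n / (p - 1))

lemma toddNumber_ne_zero (n : ℕ) : toddNumber n ≠ 0 := by
  unfold toddNumber
  apply Finset.prod_ne_zero_iff.mpr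
  intro q hq
  exact pow_ne_zero _ (Nat.Prime.pos (Finset.mem_filter.mp hq).2).ne'

lemma toddNumber_factorization (n : ℕ) {q : ℕ} (hq : q.Prime) :
    (toddNumber n).factorization q = n / (q - 1) := by
  unfold toddNumber
  rw [Nat.factorization_prod
    (fun r hr => pow_ne_zero _ (Nat.Prime.pos (Finset.mem_filter.mp hr).2).ne')]
  rw [Finsupp.finset_sum_apply]
  rw [Finset.sum_congr rfl (fun r hr => by
    rw [(Nat.Prime.factorization_pow (Finset.mem_filter.mp hr).2 : _), Finsupp.single_apply])]
  rw [Finset.sum_ite_eq' ((Finset.range (n + 2)).filter Nat.Prime)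
      q (fun r => n / (r - 1))]
  split_ifs with h
  · rfl
  · -- q ∉ filter: since q prime, q ≥ n + 2, so n / (q-1) = 0
    have hq2 : ¬ q < n + 2 := by
      intro hlt
      exact h (Finset.mem_filter.mpr ⟨Finset.mem_range.mpr hlt, hq⟩)
    have : n < q - 1 := by omega
    exact (Nat.div_eq_of_lt this).symm

/-- Sum of base-`b` digits is positive for positive `n`. -/
lemma digits_sum_pos {b n : ℕ} (hn : n ≠ 0) : 0 < (b.digits n).sum := by
  have hne : b.digits n ≠ [] := Nat.digits_ne_nil_iff_ne_zero.mpr hn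
  have hlast := Nat.getLast_digit_ne_zero b hn
  have hmem : (b.digits n).getLast hne ∈ b.digits n := List.getLast_mem hne
  have := List.single_le_sum (fun x (_ : x ∈ b.digits n) => Nat.zero_le x) _ hmem
  omega

/-- If the base-`b` digit sum of `n` equals 1, then `n` is a power of `b`. -/
lemma digits_sum_eq_one {b : ℕ} (hb : 1 < b) :
    ∀ n : ℕ, (b.digits n).sum = 1 → ∃ m, n = b ^ m := by
  intro n
  induction n using Nat.strong_induction_on with
  | _ n ih =>
    intro h
    rcases Nat.eq_zero_or_pos n with rfl | hn
    · simp at h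
    rw [Nat.digits_def' hb hn, List.sum_cons] at h
    have hdiv : n / b < n := Nat.div_lt_self hn hb
    rcases (by omega : n % b = 0 ∧ (b.digits (n / b)).sum = 1 ∨
        n % b = 1 ∧ (b.digits (n / b)).sum = 0) with ⟨h0, hs⟩ | ⟨h1, hs⟩
    · obtain ⟨m, hm⟩ := ih _ hdiv hs
      refine ⟨m + 1, ?_⟩
      have : b * (n / b) = n := Nat.mul_div_cancel' (Nat.dvd_of_mod_eq_zero h0) |>.symm ▸
        (Nat.mul_div_cancel' (Nat.dvd_of_mod_eq_zero h0))
      rw [pow_succ, mul_comm (b ^ m) b, ← hm, this]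
    · have hq0 : n / b = 0 := by
        by_contra hq
        exact absurd hs (digits_sum_pos hq).ne'
      have hnb : n < b := (Nat.div_eq_zero_iff.mp hq0).resolve_left (by omega)
      refine ⟨0, ?_⟩
      have := Nat.mod_eq_of_lt hnb
      simp only [pow_zero]
      omega

/-- Base-`b` digit sum of `b ^ k` is 1. -/
lemma digits_sum_base_pow {b : ℕ} (hb : 1 < b) (k : ℕ) :
    (b.digits (b ^ k)).sum = 1 := by
  rw [show b ^ k = b ^ k * 1 from (mul_one _).symm,
    Nat.digits_base_pow_mul hb (by norm_num), Nat.digits_def' hb (by norm_num : 0 < 1)]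
  simp [Nat.mod_eq_of_lt hb, Nat.div_eq_of_lt hb]

/-- Legendre's theorem in factorization form. -/
lemma sub_one_mul_factorization_factorial {q : ℕ} (hq : q.Prime) (n : ℕ) :
    (q - 1) * (n.factorial).factorization q = n - (q.digits n).sum := by
  haveI : Fact q.Prime := ⟨hq⟩
  rw [Nat.factorization_def _ hq]
  exact sub_one_mul_padicValNat_factorial n

lemma list_prod_factorization (q : ℕ) (l : List ℕ) (h : ∀ x ∈ l, x ≠ 0) :
    (l.prod).factorization q = (l.map fun x => x.factorization q).sum := by
  induction l with
  | nil => simp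
  | cons a t ih =>
    have ha : a ≠ 0 := h a (List.mem_cons_self (a := a) (l := t))
    have ht : t.prod ≠ 0 := by
      have : 0 < t.prod := List.prod_pos (fun x hx => Nat.pos_of_ne_zero (h x (List.mem_cons_of_mem a hx)))
      omega
    rw [List.prod_cons, Nat.factorization_mul ha ht, Finsupp.add_apply, List.map_cons,
      List.sum_cons, ih (fun x hx => h x (List.mem_cons_of_mem a hx))]

lemma list_sum_map_add_one (l : List ℕ) (f : ℕ → ℕ) :
    (l.map fun a => f a + 1).sum = (l.map f).sum + l.length := by
  induction l with
  | nil => simp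
  | cons a t ih => simp [ih]; omega

lemma list_sum_map_mul_left (l : List ℕ) (c : ℕ) (f : ℕ → ℕ) :
    (l.map fun a => c * f a).sum = c * (l.map f).sum := by
  induction l with
  | nil => simp
  | cons a t ih => simp [ih, Nat.mul_add]

/-- If every part of a partition `α` of `d > 0` has the form `p^k - 1` with `k ≥ 1`,
then `p · τ_{d-1} / ∏_i (α_i + 1)!` is an integer not divisible by `p`. -/
theorem p_mul_todd_div_partition_factorial (p d : ℕ) (hp : p.Prime) (hd : 0 < d)
    (α : List ℕ) (hpos : ∀ a ∈ α, 0 < a) (hsum : α.sum = d)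
    (hΛ : ∀ a ∈ α, ∃ k : ℕ, 1 ≤ k ∧ a = p ^ k - 1) :
    ((α.map fun a => Nat.factorial (a + 1)).prod ∣ p * toddNumber (d - 1)) ∧
      ¬ p ∣ (p * toddNumber (d - 1)) / (α.map fun a => Nat.factorial (a + 1)).prod := by
  have hp2 : 2 ≤ p := hp.two_le
  set N := (α.map fun a => Nat.factorial (a + 1)).prod with hN
  set M := p * toddNumber (d - 1) with hM
  have hN0 : N ≠ 0 := by
    have : 0 < N := List.prod_pos (by
      intro x hx
      obtain ⟨a, _, rfl⟩ := List.mem_map.mp hx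
      exact Nat.factorial_pos _)
    omega
  have hM0 : M ≠ 0 := Nat.mul_ne_zero (by omega) (toddNumber_ne_zero _)
  -- each part: a + 1 = p ^ k
  have hpow : ∀ a ∈ α, ∃ k : ℕ, 1 ≤ k ∧ a + 1 = p ^ k := by
    intro a ha
    obtain ⟨k, hk1, hk⟩ := hΛ a ha
    refine ⟨k, hk1, ?_⟩
    have : 1 ≤ p ^ k := Nat.one_le_pow _ _ (by omega)
    omega
  -- (p - 1) ∣ d
  have hdvd_d : (p - 1) ∣ d := by
    rw [← hsum]
    apply List.dvd_sum
    intro a ha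
    obtain ⟨k, _, hk⟩ := hΛ a ha
    rw [hk]
    have := Nat.sub_dvd_pow_sub_pow p 1 k
    simpa using this
  -- factorization of N at a prime q
  have hNfact : ∀ q : ℕ, N.factorization q =
      (α.map fun a => ((a + 1).factorial.factorization q)).sum := by
    intro q
    rw [hN, list_prod_factorization q _ (by
      intro x hx
      obtain ⟨a, _, rfl⟩ := List.mem_map.mp hx
      exact (Nat.factorial_pos _).ne'), List.map_map]
    rfl
  -- p-adic valuation of N: (p-1) * v_p(N) = d
  have hNp : (p - 1) * N.factorization p = d := by
    rw [hNfact p, ← list_sum_map_mul_left]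
    have hmap : (α.map fun a => (p - 1) * ((a + 1).factorial.factorization p)) = α.map id := by
      apply List.map_congr_left
      intro a ha
      obtain ⟨k, hk1, hk⟩ := hpow a ha
      rw [sub_one_mul_factorization_factorial hp (a + 1), hk,
        digits_sum_base_pow (by omega : 1 < p) k]
      simp
      omega
    rw [hmap, List.map_id, hsum]
  -- factorization of M at p
  have htodd_ne := toddNumber_ne_zero (d - 1)
  have hMfact : ∀ q : ℕ, q.Prime → M.factorization q
      = p.factorization q + (d - 1) / (q - 1) := by
    intro q hq
    rw [hM, Nat.factorization_mul (by omega) htodd_ne, Finsupp.add_apply,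
      toddNumber_factorization _ hq]
  -- set up e, t
  set e := p - 1 with he
  have he1 : 1 ≤ e := by omega
  obtain ⟨t, htd⟩ := hdvd_d
  have ht1 : 1 ≤ t := by nlinarith
  have hNp' : N.factorization p = t := by
    have : e * N.factorization p = e * t := by rw [hNp, htd]
    exact Nat.eq_of_mul_eq_mul_left (by omega) this
  have hMp : M.factorization p = t := by
    rw [hMfact p hp, hp.factorization_self]
    have hd1 : d - 1 = (e - 1) + e * (t - 1) := by
      have h2 : e * (t - 1) + e = d := by
        rw [htd]
        conv_rhs => rw [← Nat.sub_add_cancel ht1]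
        ring
      omega
    rw [hd1, Nat.add_mul_div_left _ _ (by omega : 0 < e),
      Nat.div_eq_of_lt (by omega : e - 1 < e)]
    omega
  -- q ≠ p case: bound on N's valuation
  have hNq : ∀ q : ℕ, q.Prime → q ≠ p → N.factorization q ≤ (d - 1) / (q - 1) := by
    intro q hq hqp
    have hq2 : 2 ≤ q := hq.two_le
    rw [Nat.le_div_iff_mul_le (by omega : 0 < q - 1), mul_comm]
    -- (q-1) * v_q(N) ≤ d - 1
    have hterm : ∀ a ∈ α, (q - 1) * ((a + 1).factorial.factorization q) + 1 ≤ a := by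
      intro a ha
      obtain ⟨k, hk1, hk⟩ := hpow a ha
      have hs2 : 2 ≤ (q.digits (a + 1)).sum := by
        have hs1 : 0 < (q.digits (a + 1)).sum := digits_sum_pos (by omega)
        by_contra hcon
        have hsum1 : (q.digits (a + 1)).sum = 1 := by omega
        obtain ⟨m, hm⟩ := digits_sum_eq_one (by omega : 1 < q) (a + 1) hsum1
        -- a + 1 = p ^ k = q ^ m with k ≥ 1
        have hppk : p ^ k = q ^ m := by rw [← hk, hm]
        have hm1 : 1 ≤ m := by
          rcases Nat.eq_zero_or_pos m with rfl | h
          · simp at hppk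
            have : 2 ≤ p ^ k := le_trans hp2 (Nat.le_self_pow (by omega) p)
            omega
          · exact h
        have hpq : p ∣ q ^ m := by
          rw [← hppk]
          exact dvd_pow_self p (by omega)
        have : p ∣ q := hp.dvd_of_dvd_pow hpq
        exact hqp ((Nat.prime_dvd_prime_iff_eq hp hq).mp this).symm
      have hleg := sub_one_mul_factorization_factorial hq (a + 1)
      have hapos : 0 < a := hpos a ha
      omega
    have hsumle : (α.map fun a => (q - 1) * ((a + 1).factorial.factorization q) + 1).sum
        ≤ (α.map id).sum := List.sum_le_sum (by
          intro a ha
          simpa using hterm a ha)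
    rw [list_sum_map_add_one, List.map_id, hsum] at hsumle
    have hlen : 1 ≤ α.length := by
      rcases α with _ | ⟨a, t⟩
      · simp at hsum; omega
      · simp
    have : ((α.map fun a => (q - 1) * ((a + 1).factorial.factorization q)).sum) + 1 ≤ d := by
      rw [list_sum_map_mul_left] at *
      omega
    rw [hNfact q, ← list_sum_map_mul_left] at *
    omega
  -- divisibility
  have hdvdNM : N ∣ M := by
    rw [← Nat.factorization_le_iff_dvd hN0 hM0]
    intro q
    by_cases hq : q.Prime
    · by_cases hqp : q = p
      · subst hqp
        rw [hNp', hMp]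
      · calc N.factorization q ≤ (d - 1) / (q - 1) := hNq q hq hqp
          _ ≤ M.factorization q := by rw [hMfact q hq]; omega
    · simp [Nat.factorization_eq_zero_of_not_prime _ hq]
  refine ⟨hdvdNM, ?_⟩
  -- non-divisibility of quotient by p
  intro hcon
  have hMN0 : M / N ≠ 0 := by
    have := Nat.div_pos (Nat.le_of_dvd (Nat.pos_of_ne_zero hM0) hdvdNM) (Nat.pos_of_ne_zero hN0)
    omega
  have hMeq : M = (M / N) * N := (Nat.div_mul_cancel hdvdNM).symm
  have h1 : 1 ≤ (M / N).factorization p :=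
    (Nat.Prime.dvd_iff_one_le_factorization hp hMN0).mp hcon
  have : M.factorization p = (M / N).factorization p + N.factorization p := by
    conv_lhs => rw [hMeq]
    rw [Nat.factorization_mul hMN0 hN0, Finsupp.add_apply]
  omega
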